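/- Let M be a totally ordered cancellative commutative monoid whose identity element 0 is the smallest element, let R = ⊕_{x∈M} R_x be an M-graded commutative ring, and let f = Σ_{x∈M} r_x ∈ R with r_x ∈ R_x for all x. Then f is invertible in R if and only if r₀ is invertible in the subring R₀ and r_x is nilpotent for all x ≠ 0. -/

import Mathlib

open DirectSum

section Aux

variable {M : Type*} [AddCommMonoid M] [LinearOrder M] [IsOrderedCancelAddMonoid M] [DecidableEq M]
    {R : Type*} [CommRing R] (𝒜 : M → AddSubgroup R) [GradedRing 𝒜]

lemma aux_decompose_mul_zero (h0 : ∀ x : M, 0 ≤ x) (a b : R) :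
    (DirectSum.decompose 𝒜 (a * b) 0 : R) =
      (DirectSum.decompose 𝒜 a 0 : R) * (DirectSum.decompose 𝒜 b 0 : R) := by
  classical
  rw [DirectSum.decompose_mul, DirectSum.coe_mul_apply]
  have hsub : ((DirectSum.decompose 𝒜 a).support ×ˢ (DirectSum.decompose 𝒜 b).support).filter
      (fun ij : M × M => ij.1 + ij.2 = 0) ⊆ {((0 : M), (0 : M))} := by
    intro ij hij
    simp only [Finset.mem_filter] at hij
    have h1 : ij.1 = 0 := le_antisymm (by
      calc ij.1 = ij.1 + 0 := (add_zero _).symm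
      _ ≤ ij.1 + ij.2 := add_le_add_right (h0 _) _
      _ = 0 := hij.2) (h0 _)
    have h2 : ij.2 = 0 := by
      have := hij.2; rw [h1, zero_add] at this; exact this
    simp [Prod.ext_iff, h1, h2]
  rcases Finset.subset_singleton_iff.mp hsub with h | h
  · rw [h, Finset.sum_empty]
    by_cases ha : (0 : M) ∈ (DirectSum.decompose 𝒜 a).support
    · by_cases hb : (0 : M) ∈ (DirectSum.decompose 𝒜 b).support
      · exfalso
        have : ((0 : M), (0 : M)) ∈ ((DirectSum.decompose 𝒜 a).support ×ˢ
            (DirectSum.decompose 𝒜 b).support).filter (fun ij : M × M => ij.1 + ij.2 = 0) := by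
          simp [ha, hb]
        rw [h] at this; simp at this
      · have : DirectSum.decompose 𝒜 b 0 = 0 := DFinsupp.notMem_support_iff.mp hb
        rw [this]; simp
    · have : DirectSum.decompose 𝒜 a 0 = 0 := DFinsupp.notMem_support_iff.mp ha
      rw [this]; simp
  · rw [h, Finset.sum_singleton]

/-- If `f * g = 1` then every positive-degree component of `f` lies in every prime ideal. -/
lemma aux_mem_prime (h0 : ∀ x : M, 0 ≤ x) {f g : R} (hfg : f * g = 1)
    (P : Ideal R) (hP : P.IsPrime) {x : M} (hx : x ≠ 0) :
    (DirectSum.decompose 𝒜 f x : R) ∈ P := by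
  classical
  set F := DirectSum.decompose 𝒜 f with hF
  set G := DirectSum.decompose 𝒜 g with hG
  have h00 : (F 0 : R) * (G 0 : R) = 1 := by
    have h1 : (DirectSum.decompose 𝒜 (1 : R) 0 : R) = 1 :=
      DirectSum.decompose_of_mem_same 𝒜 (SetLike.GradedOne.one_mem (A := 𝒜))
    have := aux_decompose_mul_zero 𝒜 h0 f g
    rw [hfg, h1] at this
    exact this.symm
  -- the "supports mod P"
  set S := F.support.filter (fun i => (F i : R) ∉ P) with hS
  set T := G.support.filter (fun i => (G i : R) ∉ P) with hT
  have hone : (1 : R) ∉ P := (Ideal.ne_top_iff_one P).mp hP.ne_top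
  have h0S : (0 : M) ∈ S := by
    refine Finset.mem_filter.mpr ⟨DFinsupp.mem_support_iff.mpr ?_, ?_⟩
    · intro h; rw [h] at h00; simp at h00
      exact hone (h00 ▸ P.zero_mem)
    · intro h
      exact hone (h00 ▸ P.mul_mem_right _ h)
  have h0T : (0 : M) ∈ T := by
    refine Finset.mem_filter.mpr ⟨DFinsupp.mem_support_iff.mpr ?_, ?_⟩
    · intro h; rw [h] at h00; simp at h00
      exact hone (h00 ▸ P.zero_mem)
    · intro h
      exact hone (h00 ▸ P.mul_mem_left _ h)
  have hSne : S.Nonempty := ⟨0, h0S⟩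
  have hTne : T.Nonempty := ⟨0, h0T⟩
  set a := S.max' hSne with ha
  set b := T.max' hTne with hb
  have haS : a ∈ S := S.max'_mem hSne
  have hbT : b ∈ T := T.max'_mem hTne
  -- claim a = 0
  have hab : a = 0 ∧ b = 0 := by
    by_contra hcon
    have habne : a + b ≠ 0 := by
      intro h
      apply hcon
      have ha0 : a = 0 := le_antisymm (by
        calc a = a + 0 := (add_zero _).symm
        _ ≤ a + b := add_le_add_right (h0 _) _
        _ = 0 := h) (h0 _)
      have hb0 : b = 0 := by rwa [ha0, zero_add] at h
      exact ⟨ha0, hb0⟩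
    -- the (a+b)-component of f*g = 1 is zero
    have hzero : ((F * G) (a + b) : R) = 0 := by
      have : F * G = DirectSum.decompose 𝒜 1 := by
        rw [hF, hG, ← DirectSum.decompose_mul, hfg]
      rw [this]
      exact DirectSum.decompose_of_mem_ne 𝒜 (SetLike.GradedOne.one_mem (A := 𝒜))
        (fun h => habne h.symm)
    rw [DirectSum.coe_mul_apply] at hzero
    set E := (F.support ×ˢ G.support).filter (fun ij : M × M => ij.1 + ij.2 = a + b) with hE
    have habE : (a, b) ∈ E := by
      refine Finset.mem_filter.mpr ⟨Finset.mem_product.mpr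
        ⟨(Finset.mem_filter.mp haS).1, (Finset.mem_filter.mp hbT).1⟩, rfl⟩
    -- every other term is in P
    have hterms : ∀ ij ∈ E.erase (a, b), (F ij.1 : R) * (G ij.2 : R) ∈ P := by
      rintro ⟨i, j⟩ hij
      have hijE := Finset.mem_of_mem_erase hij
      have hijne := Finset.ne_of_mem_erase hij
      simp only [hE, Finset.mem_filter, Finset.mem_product] at hijE
      by_cases hiP : (F i : R) ∈ P
      · exact P.mul_mem_right _ hiP
      by_cases hjP : (G j : R) ∈ P
      · exact P.mul_mem_left _ hjP
      exfalso
      have hiS : i ∈ S := Finset.mem_filter.mpr ⟨hijE.1.1, hiP⟩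
      have hjT : j ∈ T := Finset.mem_filter.mpr ⟨hijE.1.2, hjP⟩
      have hia : i ≤ a := S.le_max' _ hiS
      have hjb : j ≤ b := T.le_max' _ hjT
      have : i = a := by
        by_contra hne
        have : i < a := lt_of_le_of_ne hia hne
        have : i + j < a + b := add_lt_add_of_lt_of_le this hjb
        rw [hijE.2] at this; exact lt_irrefl _ this
      have : j = b := by
        subst this
        exact add_left_cancel hijE.2
      apply hijne
      simp_all
    -- so the (a,b)-term is in P
    have hsum : ∑ ij ∈ E, (F ij.1 : R) * (G ij.2 : R) ∈ P := hzero ▸ P.zero_mem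
    rw [← Finset.add_sum_erase E _ habE] at hsum
    have hrest : ∑ ij ∈ E.erase (a, b), (F ij.1 : R) * (G ij.2 : R) ∈ P :=
      Ideal.sum_mem _ hterms
    have hab_mem : (F a : R) * (G b : R) ∈ P := by
      have := Ideal.sub_mem P hsum hrest
      simpa using this
    rcases hP.mem_or_mem hab_mem with h | h
    · exact (Finset.mem_filter.mp haS).2 h
    · exact (Finset.mem_filter.mp hbT).2 h
  -- now conclude: x ∉ S so F x ∈ P or F x = 0
  by_cases hxs : x ∈ F.support
  · by_contra hmem
    have : x ∈ S := Finset.mem_filter.mpr ⟨hxs, hmem⟩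
    have : x ≤ a := S.le_max' _ this
    rw [hab.1] at this
    exact hx (le_antisymm this (h0 x))
  · have : F x = 0 := DFinsupp.notMem_support_iff.mp hxs
    rw [this]
    simp

end Aux

/-- Let `M` be a totally ordered cancellative commutative monoid whose identity element `0`
is the smallest element and let `R` be an `M`-graded commutative ring.  An element `f ∈ R` is
invertible iff its degree-zero component `r₀` is invertible in the subring `R₀` (i.e. has an
inverse lying in `R₀`) and its component `r_x` is nilpotent for every `x ≠ 0`. -/
theorem isUnit_iff_degreeZero_unit_and_nilpotent_components
    {M : Type*} [AddCommMonoid M] [LinearOrder M] [IsOrderedCancelAddMonoid M] [DecidableEq M]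
    (h0 : ∀ x : M, 0 ≤ x)
    {R : Type*} [CommRing R] (𝒜 : M → AddSubgroup R) [GradedRing 𝒜] (f : R) :
    IsUnit f ↔
      ((∃ s ∈ 𝒜 (0 : M), (DirectSum.decompose 𝒜 f 0 : R) * s = 1) ∧
        ∀ x : M, x ≠ 0 → IsNilpotent (DirectSum.decompose 𝒜 f x : R)) := by
  classical
  constructor
  · rintro ⟨u, rfl⟩
    obtain ⟨g, hfg⟩ : ∃ g, (u : R) * g = 1 := ⟨↑u⁻¹, u.mul_inv⟩
    constructor
    · refine ⟨(DirectSum.decompose 𝒜 g 0 : R), SetLike.coe_mem _, ?_⟩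
      have h1 : (DirectSum.decompose 𝒜 (1 : R) 0 : R) = 1 :=
        DirectSum.decompose_of_mem_same 𝒜 (SetLike.GradedOne.one_mem (A := 𝒜))
      have := aux_decompose_mul_zero 𝒜 h0 (u : R) g
      rw [hfg, h1] at this
      exact this.symm
    · intro x hx
      rw [← mem_nilradical, nilradical_eq_sInf, Submodule.mem_sInf]
      intro P hP
      exact aux_mem_prime 𝒜 h0 hfg P hP hx
  · rintro ⟨⟨s, _, hs⟩, hnil⟩
    have hu0 : IsUnit (DirectSum.decompose 𝒜 f 0 : R) := IsUnit.of_mul_eq_one _ hs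
    have hsum : ∑ i ∈ (DirectSum.decompose 𝒜 f).support,
        (DirectSum.decompose 𝒜 f i : R) = f := DirectSum.sum_support_decompose 𝒜 f
    have hrest : IsNilpotent (f - (DirectSum.decompose 𝒜 f 0 : R)) := by
      have hdecomp : f - (DirectSum.decompose 𝒜 f 0 : R) =
          ∑ i ∈ ((DirectSum.decompose 𝒜 f).support).erase 0,
            (DirectSum.decompose 𝒜 f i : R) := by
        by_cases h : (0 : M) ∈ (DirectSum.decompose 𝒜 f).support
        · rw [sub_eq_iff_eq_add, Finset.sum_erase_add _ _ h]
          exact hsum.symm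
        · have h1 : (DirectSum.decompose 𝒜 f 0 : R) = 0 := by
            rw [DFinsupp.notMem_support_iff.mp h]; rfl
          rw [h1, sub_zero, Finset.erase_eq_of_notMem h]
          exact hsum.symm
      rw [hdecomp]
      exact isNilpotent_sum (fun i hi =>
        hnil i (Finset.ne_of_mem_erase hi))
    have := hrest.isUnit_add_right_of_commute hu0 (Commute.all _ _)
    simpa using this
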